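/- Let F(z) = Σ_{k=0}^∞ F_k z^k be holomorphic on the disc |z| < R with R > 0, and let 0 < δ < R. Then the function I(s) := ∫_{1-δ}^1 F(1-t)(1-t)^s dt, initially defined for real s > -1, extends to a meromorphic function on all of ℂ whose only possible singularities are simple poles at s = -j-1 for j = 0, 1, 2, …, with residue F_j at s = -j-1. -/

import Mathlib

open Filter Topology MeasureTheory Set

/-- Lemma (a): if `F(z) = Σ Fc k · z^k` is holomorphic on `|z| < R` and `0 < δ < R`, then
`I(s) = ∫_{1-δ}^1 F(1-t)(1-t)^s dt` (defined for real `s > -1`) extends to a function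
holomorphic on `ℂ` away from `{-j-1 : j ∈ ℕ}`, with (at most) simple poles at `s = -j-1`
having residue `Fc j`. -/
theorem integral_meromorphic_continuation_simple_poles
    (R δ : ℝ) (hR : 0 < R) (hδ : 0 < δ) (hδR : δ < R)
    (F : ℂ → ℂ) (Fc : ℕ → ℂ)
    (hF : ∀ z : ℂ, ‖z‖ < R → HasSum (fun k => Fc k * z ^ k) (F z)) :
    ∃ I : ℂ → ℂ,
      (∀ s : ℝ, -1 < s →
        I (s : ℂ) = ∫ t in (1 - δ)..1, F ((1 : ℂ) - t) * (((1 - t) ^ s : ℝ) : ℂ)) ∧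
      AnalyticOnNhd ℂ I {s : ℂ | ∀ j : ℕ, s ≠ -(j : ℂ) - 1} ∧
      (∀ j : ℕ, Tendsto (fun s : ℂ => (s + j + 1) * I s)
        (𝓝[≠] (-(j : ℂ) - 1)) (𝓝 (Fc j))) := by
  classical
  set r : ℝ := (δ + R) / 2 with hrdef
  have hδr : δ < r := by rw [hrdef]; linarith
  have hrR : r < R := by rw [hrdef]; linarith
  have hr0 : 0 < r := hδ.trans hδr
  -- summability of ‖Fc k‖ δ^k
  have hsumr : Summable fun k => Fc k * (r : ℂ) ^ k :=
    (hF r (by simpa [abs_of_pos hr0] using hrR)).summable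
  have hev : ∀ᶠ k in atTop, ‖Fc k * (r : ℂ) ^ k‖ < 1 := by
    have h0 := hsumr.tendsto_atTop_zero.norm
    rw [norm_zero] at h0
    simpa using h0.eventually_lt_const one_pos
  have hsummδ : Summable fun k => ‖Fc k‖ * δ ^ k := by
    apply Summable.of_norm_bounded_eventually_nat (g := fun k => (δ / r) ^ k)
      (summable_geometric_of_lt_one (by positivity) (by rw [div_lt_one hr0]; exact hδr))
    filter_upwards [hev] with k hk
    have hnorm : ‖Fc k * (r : ℂ) ^ k‖ = ‖Fc k‖ * r ^ k := by
      simp [norm_mul, norm_pow, abs_of_pos hr0]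
    rw [hnorm] at hk
    rw [Real.norm_of_nonneg (by positivity)]
    have hδk : δ ^ k = r ^ k * (δ / r) ^ k := by
      rw [← mul_pow, mul_div_cancel₀ _ hr0.ne']
    calc ‖Fc k‖ * δ ^ k = (‖Fc k‖ * r ^ k) * (δ / r) ^ k := by rw [hδk]; ring
      _ ≤ 1 * (δ / r) ^ k := by
          apply mul_le_mul_of_nonneg_right hk.le (by positivity)
      _ = (δ / r) ^ k := one_mul _
  set a : ℕ → ℂ := fun k => Fc k * (δ : ℂ) ^ (k + 1) with hadef
  have hna : ∀ k, ‖a k‖ = ‖Fc k‖ * δ ^ (k + 1) := fun k => by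
    simp [hadef, norm_mul, norm_pow, abs_of_pos hδ]
  have hsa : Summable fun k => ‖a k‖ :=
    (hsummδ.mul_right δ).congr fun k => by rw [hna, pow_succ]; ring
  set E : ℂ → ℂ := fun s => Complex.exp (s * (Real.log δ : ℂ)) with hEdef
  have hEcont : Continuous E := by fun_prop
  have hEdiff : Differentiable ℂ E := by fun_prop
  set g : ℂ → ℂ := fun s => ∑' k, a k / (s + (k : ℂ) + 1) with hgdef
  have hEreal : ∀ s : ℝ, E (s : ℂ) = ((δ ^ s : ℝ) : ℂ) := by
    intro s
    rw [hEdef, Real.rpow_def_of_pos hδ]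
    push_cast
    ring_nf
  refine ⟨fun s => E s * g s, ?_, ?_, ?_⟩
  · -- the integral formula
    intro s hs
    have hδle : (0 : ℝ) ≤ δ := hδ.le
    have hA : (∫ t in (1 - δ)..1, F ((1 : ℂ) - t) * (((1 - t) ^ s : ℝ) : ℂ))
        = ∫ u in (0 : ℝ)..δ, F ((u : ℝ) : ℂ) * ((u ^ s : ℝ) : ℂ) := by
      have h1 := intervalIntegral.integral_comp_sub_left
        (a := 1 - δ) (b := 1) (fun u : ℝ => F ((u : ℝ) : ℂ) * ((u ^ s : ℝ) : ℂ)) 1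
      simp only [sub_self, sub_sub_cancel] at h1
      rw [← h1]
      apply intervalIntegral.integral_congr
      intro t _
      push_cast
      norm_num
    set f : ℕ → ℝ → ℂ := fun k u => Fc k * ((u ^ (s + (k : ℝ)) : ℝ) : ℂ) with hfdef
    have hexp : ∀ k : ℕ, (-1 : ℝ) < s + (k : ℝ) := by
      intro k
      have : (0 : ℝ) ≤ (k : ℝ) := Nat.cast_nonneg k
      linarith
    have hexp1 : ∀ k : ℕ, (0 : ℝ) < s + (k : ℝ) + 1 := fun k => by linarith [hexp k]
    have hrpowint : ∀ k : ℕ, IntegrableOn (fun u : ℝ => u ^ (s + (k : ℝ))) (Ioc 0 δ) := by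
      intro k
      have h2 := intervalIntegral.intervalIntegrable_rpow' (a := 0) (b := δ) (hexp k)
      rwa [intervalIntegrable_iff_integrableOn_Ioc_of_le hδle] at h2
    have hfint : ∀ k, IntegrableOn (f k) (Ioc 0 δ) := fun k =>
      ((hrpowint k).ofReal).const_mul _
    have hCk : ∀ k : ℕ, (∫ u in Ioc 0 δ, (u : ℝ) ^ (s + (k : ℝ)))
        = δ ^ (s + (k : ℝ) + 1) / (s + (k : ℝ) + 1) := by
      intro k
      rw [← intervalIntegral.integral_of_le hδle, integral_rpow (Or.inl (hexp k)),
        Real.zero_rpow (hexp1 k).ne', sub_zero]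
    have hnormval : ∀ k : ℕ, (∫ u in Ioc 0 δ, ‖f k u‖)
        = ‖Fc k‖ * (δ ^ (s + (k : ℝ) + 1) / (s + (k : ℝ) + 1)) := by
      intro k
      rw [← hCk k, ← integral_const_mul]
      apply setIntegral_congr_fun measurableSet_Ioc
      intro u hu
      rw [hfdef]
      simp only [norm_mul, Complex.norm_real, Real.norm_eq_abs,
        abs_of_nonneg (Real.rpow_nonneg hu.1.le _)]
    have hsumnorm : Summable fun k => ∫ u in Ioc 0 δ, ‖f k u‖ := by
      refine Summable.of_nonneg_of_le
        (fun k => integral_nonneg fun u => norm_nonneg _)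
        (fun k => ?_) (hsummδ.mul_left (δ ^ (s + 1) / (s + 1)))
      rw [hnormval k]
      have h1 : δ ^ (s + (k : ℝ) + 1) = δ ^ (s + 1) * δ ^ k := by
        rw [← Real.rpow_natCast δ k, ← Real.rpow_add hδ]
        ring_nf
      rw [h1]
      calc ‖Fc k‖ * (δ ^ (s + 1) * δ ^ k / (s + (k : ℝ) + 1))
          ≤ ‖Fc k‖ * (δ ^ (s + 1) * δ ^ k / (s + 1)) :=
            mul_le_mul_of_nonneg_left
              (div_le_div_of_nonneg_left (by positivity) (by linarith)
                (by linarith [Nat.cast_nonneg (α := ℝ) k])) (norm_nonneg _)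
        _ = δ ^ (s + 1) / (s + 1) * (‖Fc k‖ * δ ^ k) := by ring
    have hHS := MeasureTheory.hasSum_integral_of_summable_integral_norm
      (μ := (volume : Measure ℝ).restrict (Ioc 0 δ)) (F := f) hfint hsumnorm
    have hptwise : ∀ u ∈ Ioc (0 : ℝ) δ,
        (∑' k, f k u) = F ((u : ℝ) : ℂ) * ((u ^ s : ℝ) : ℂ) := by
      intro u hu
      have hu0 : 0 < u := hu.1
      have huR : ‖((u : ℝ) : ℂ)‖ < R := by
        rw [Complex.norm_real, Real.norm_eq_abs, abs_of_pos hu0]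
        exact lt_of_le_of_lt hu.2 hδR
      have hFS := (hF _ huR).mul_right (((u ^ s : ℝ) : ℂ))
      have hterm : ∀ k : ℕ, f k u = Fc k * ((u : ℝ) : ℂ) ^ k * ((u ^ s : ℝ) : ℂ) := by
        intro k
        rw [hfdef]
        dsimp only
        rw [show (u : ℝ) ^ (s + (k : ℝ)) = u ^ s * u ^ (k : ℕ) by
          rw [Real.rpow_add hu0, Real.rpow_natCast]]
        push_cast
        ring
      rw [tsum_congr hterm, hFS.tsum_eq]
    have hint2 : (∫ u in Ioc 0 δ, ∑' k, f k u)
        = ∫ u in (0 : ℝ)..δ, F ((u : ℝ) : ℂ) * ((u ^ s : ℝ) : ℂ) := by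
      rw [intervalIntegral.integral_of_le hδle]
      exact setIntegral_congr_fun measurableSet_Ioc hptwise
    have hintval : ∀ k : ℕ, (∫ u in Ioc 0 δ, f k u)
        = Fc k * ((δ ^ (s + (k : ℝ) + 1) / (s + (k : ℝ) + 1) : ℝ) : ℂ) := by
      intro k
      rw [hfdef]
      dsimp only
      rw [integral_const_mul]
      congr 1
      rw [← hCk k]
      exact integral_ofReal
    have hterm2 : ∀ k : ℕ, E (s : ℂ) * (a k / ((s : ℂ) + (k : ℂ) + 1))
        = Fc k * ((δ ^ (s + (k : ℝ) + 1) / (s + (k : ℝ) + 1) : ℝ) : ℂ) := by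
      intro k
      rw [hEreal s, hadef]
      dsimp only
      have h1 : (δ : ℝ) ^ (s + (k : ℝ) + 1) = δ ^ s * δ ^ (k + 1 : ℕ) := by
        rw [← Real.rpow_natCast δ (k + 1), ← Real.rpow_add hδ]
        push_cast
        ring_nf
      have h2 : ((s : ℂ) + (k : ℂ) + 1) = (((s + (k : ℝ) + 1) : ℝ) : ℂ) := by push_cast; ring
      have h3 : (((s + (k : ℝ) + 1) : ℝ) : ℂ) ≠ 0 := by
        exact_mod_cast (hexp1 k).ne'
      rw [h1, h2]
      push_cast
      field_simp
    calc E (s : ℂ) * g (s : ℂ)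
        = ∑' k : ℕ, E (s : ℂ) * (a k / ((s : ℂ) + (k : ℂ) + 1)) := by
          rw [hgdef]; exact (tsum_mul_left).symm
      _ = ∑' k : ℕ, Fc k * ((δ ^ (s + (k : ℝ) + 1) / (s + (k : ℝ) + 1) : ℝ) : ℂ) :=
          tsum_congr hterm2
      _ = ∑' k : ℕ, ∫ u in Ioc 0 δ, f k u := tsum_congr fun k => (hintval k).symm
      _ = ∫ u in Ioc 0 δ, ∑' k, f k u := hHS.tsum_eq
      _ = ∫ u in (0 : ℝ)..δ, F ((u : ℝ) : ℂ) * ((u ^ s : ℝ) : ℂ) := hint2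
      _ = ∫ t in (1 - δ)..1, F ((1 : ℂ) - t) * (((1 - t) ^ s : ℝ) : ℂ) := hA.symm
  · -- analyticity
    intro s₀ hs₀
    simp only [Set.mem_setOf_eq] at hs₀
    set N : ℕ := ⌈‖s₀‖⌉₊ + 2 with hN
    set T : Finset ℝ := (Finset.range N).image fun j : ℕ => ‖s₀ + (j : ℂ) + 1‖ with hT
    have hTne : T.Nonempty :=
      ⟨‖s₀ + (0 : ℕ) + 1‖, Finset.mem_image_of_mem _ (Finset.mem_range.mpr (by rw [hN]; omega))⟩
    set ε : ℝ := min 1 (T.min' hTne) with hε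
    have hε1 : ε ≤ 1 := min_le_left _ _
    have hεpos : 0 < ε := by
      rcases Finset.mem_image.mp (T.min'_mem hTne) with ⟨j, _, hj⟩
      have hne : s₀ + (j : ℂ) + 1 ≠ 0 := by
        intro h; exact hs₀ j (by linear_combination h)
      rw [hε]
      exact lt_min one_pos (by rw [← hj]; exact norm_pos_iff.mpr hne)
    have hball : ∀ s ∈ Metric.ball s₀ (ε / 2), ∀ k : ℕ, ε / 2 ≤ ‖s + (k : ℂ) + 1‖ := by
      intro s hsmem k
      have hd : ‖s - s₀‖ < ε / 2 := by rwa [Metric.mem_ball, Complex.dist_eq] at hsmem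
      rcases lt_or_ge k N with hk | hk
      · have h1 : ε ≤ ‖s₀ + (k : ℂ) + 1‖ := le_trans (min_le_right _ _)
          (T.min'_le _ (Finset.mem_image_of_mem _ (Finset.mem_range.mpr hk)))
        have h2 : ‖s₀ + (k : ℂ) + 1‖ - ‖s - s₀‖ ≤ ‖s + (k : ℂ) + 1‖ := by
          have h3 := norm_sub_norm_le (s₀ + (k : ℂ) + 1) (s₀ - s)
          have h4 : (s₀ + (k : ℂ) + 1) - (s₀ - s) = s + (k : ℂ) + 1 := by ring
          rw [h4] at h3
          have h5 : ‖s₀ - s‖ = ‖s - s₀‖ := by rw [← norm_neg]; ring_nf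
          linarith [h3, h5.le]
        linarith
      · have hk1 : (N : ℝ) ≤ (k : ℝ) := Nat.cast_le.mpr hk
        have hcast : ‖(k : ℂ) + 1‖ = (k : ℝ) + 1 := by
          rw [show ((k : ℂ) + 1) = (((k + 1 : ℕ)) : ℂ) by push_cast; ring,
            Complex.norm_natCast]
          push_cast; ring
        have h2 : ‖(k : ℂ) + 1‖ - ‖s‖ ≤ ‖s + (k : ℂ) + 1‖ := by
          have h3 := norm_sub_norm_le ((k : ℂ) + 1) (-s)
          have h4 : ((k : ℂ) + 1) - (-s) = s + (k : ℂ) + 1 := by ring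
          rw [h4, norm_neg] at h3
          linarith
        have h5 : ‖s‖ ≤ ‖s₀‖ + ε / 2 := by
          have := norm_sub_norm_le s s₀
          linarith
        have h6 : ‖s₀‖ ≤ (⌈‖s₀‖⌉₊ : ℝ) := Nat.le_ceil _
        have h7 : ((⌈‖s₀‖⌉₊ : ℕ) : ℝ) + 2 ≤ (k : ℝ) := by
          rw [hN] at hk1; push_cast at hk1; linarith
        rw [hcast] at h2
        linarith
    have hgd : DifferentiableOn ℂ g (Metric.ball s₀ (ε / 2)) := by
      apply Complex.differentiableOn_tsum_of_summable_norm (hsa.mul_right (2 / ε))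
      · intro k
        apply DifferentiableOn.div (differentiableOn_const _) (by fun_prop)
        intro s hsmem h
        have hb := hball s hsmem k
        rw [h, norm_zero] at hb
        linarith
      · exact Metric.isOpen_ball
      · intro k s hsmem
        have h2 : (0 : ℝ) < ‖s + (k : ℂ) + 1‖ :=
          lt_of_lt_of_le (by positivity) (hball s hsmem k)
        rw [norm_div, div_le_iff₀ h2]
        have h3 : ‖a k‖ * (2 / ε) * (ε / 2) ≤ ‖a k‖ * (2 / ε) * ‖s + (k : ℂ) + 1‖ :=
          mul_le_mul_of_nonneg_left (hball s hsmem k) (by positivity)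
        have h4 : ‖a k‖ * (2 / ε) * (ε / 2) = ‖a k‖ := by field_simp
        linarith
    have hId : DifferentiableOn ℂ (fun s => E s * g s) (Metric.ball s₀ (ε / 2)) :=
      hEdiff.differentiableOn.mul hgd
    exact hId.analyticAt (Metric.isOpen_ball.mem_nhds (Metric.mem_ball_self (by positivity)))
  · -- residues
    intro j
    set s₀ : ℂ := -(j : ℂ) - 1 with hs₀def
    set q : ℕ → ℂ → ℂ :=
      fun k s => if k = j then a j else a k * ((s + (j : ℂ) + 1) / (s + (k : ℂ) + 1)) with hq
    have hlow : ∀ s ∈ Metric.ball s₀ (1 / 2 : ℝ), ∀ k : ℕ, k ≠ j →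
        (1 : ℝ) / 2 ≤ ‖s + (k : ℂ) + 1‖ := by
      intro s hsmem k hkj
      have hd : ‖s - s₀‖ < 1 / 2 := by rwa [Metric.mem_ball, Complex.dist_eq] at hsmem
      have h1 : ‖s₀ + (k : ℂ) + 1‖ = |(k : ℝ) - (j : ℝ)| := by
        rw [hs₀def, show -(j : ℂ) - 1 + (k : ℂ) + 1 = (((k : ℝ) - (j : ℝ) : ℝ) : ℂ) by
          push_cast; ring]
        exact Complex.norm_real _
      have h2 : (1 : ℝ) ≤ |(k : ℝ) - (j : ℝ)| := by
        have hne : ((k : ℤ) - (j : ℤ)) ≠ 0 := sub_ne_zero.mpr (by exact_mod_cast hkj)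
        have h3 : (1 : ℤ) ≤ |(k : ℤ) - (j : ℤ)| := Int.one_le_abs hne
        have h4 : ((|(k : ℤ) - (j : ℤ)| : ℤ) : ℝ) = |(k : ℝ) - (j : ℝ)| := by
          rw [Int.cast_abs]; push_cast; ring_nf
        rw [← h4]; exact_mod_cast h3
      have h4 := norm_sub_norm_le (s₀ + (k : ℂ) + 1) (s₀ - s)
      have h5 : (s₀ + (k : ℂ) + 1) - (s₀ - s) = s + (k : ℂ) + 1 := by ring
      rw [h5, h1] at h4
      have h6 : ‖s₀ - s‖ = ‖s - s₀‖ := by rw [← norm_neg (s₀ - s)]; ring_nf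
      rw [h6] at h4
      linarith
    set G : ℂ → ℂ := fun s => ∑' k, q k s with hG
    have hGcont : ContinuousOn G (Metric.ball s₀ (1 / 2)) := by
      apply continuousOn_tsum (u := fun k => ‖a k‖) ?_ hsa
      · intro k s hsmem
        rw [hq]; dsimp only
        by_cases hkj : k = j
        · simp [hkj]
        · simp only [hkj, if_false]
          rw [norm_mul, norm_div]
          have hb := hlow s hsmem k hkj
          have hd : ‖s - s₀‖ < 1 / 2 := by rwa [Metric.mem_ball, Complex.dist_eq] at hsmem
          have hsj : ‖s + (j : ℂ) + 1‖ = ‖s - s₀‖ := by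
            rw [hs₀def, show s - (-(j : ℂ) - 1) = s + (j : ℂ) + 1 by ring]
          have hle : ‖s + (j : ℂ) + 1‖ / ‖s + (k : ℂ) + 1‖ ≤ 1 := by
            rw [div_le_one (lt_of_lt_of_le one_half_pos hb)]
            rw [hsj]; linarith
          calc ‖a k‖ * (‖s + (j : ℂ) + 1‖ / ‖s + (k : ℂ) + 1‖) ≤ ‖a k‖ * 1 :=
                mul_le_mul_of_nonneg_left hle (norm_nonneg _)
            _ = ‖a k‖ := mul_one _
      · intro k
        rw [hq]; dsimp only
        by_cases hkj : k = j
        · simp only [hkj, if_pos rfl]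
          exact continuousOn_const
        · simp only [hkj, if_false]
          apply ContinuousOn.mul continuousOn_const
          apply ContinuousOn.div (by fun_prop) (by fun_prop)
          intro s hsmem h
          have hb := hlow s hsmem k hkj
          rw [h, norm_zero] at hb
          linarith
    have hGs₀ : G s₀ = a j := by
      rw [hG]; dsimp only
      rw [tsum_eq_single j]
      · simp [hq]
      · intro k hkj
        simp only [hq, hkj, if_false]
        rw [show s₀ + (j : ℂ) + 1 = 0 by rw [hs₀def]; ring, zero_div, mul_zero]
    have hmem : Metric.ball s₀ (1 / 2 : ℝ) ∈ 𝓝 s₀ := Metric.ball_mem_nhds _ one_half_pos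
    have hEq : ∀ s ∈ Metric.ball s₀ (1 / 2 : ℝ) \ {s₀},
        (s + (j : ℂ) + 1) * (E s * g s) = E s * G s := by
      rintro s ⟨hsmem, hsne⟩
      have hne0 : s + (j : ℂ) + 1 ≠ 0 := by
        intro h
        apply hsne
        simp only [Set.mem_singleton_iff, hs₀def]
        linear_combination h
      have hgG : (s + (j : ℂ) + 1) * g s = G s := by
        rw [hgdef, hG]; dsimp only
        rw [← tsum_mul_left]
        apply tsum_congr
        intro k
        by_cases hkj : k = j
        · subst hkj
          have hqk : q k s = a k := by rw [hq]; simp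
          rw [hqk, mul_comm, div_mul_cancel₀ _ hne0]
        · rw [hq]; simp only [hkj, if_false]
          ring
      rw [← hgG]; ring
    have hcont : ContinuousWithinAt (fun s => E s * G s) (Metric.ball s₀ (1 / 2 : ℝ)) s₀ :=
      hEcont.continuousWithinAt.mul (hGcont s₀ (Metric.mem_ball_self one_half_pos))
    have ht : Tendsto (fun s => E s * G s) (𝓝[Metric.ball s₀ (1 / 2 : ℝ) \ {s₀}] s₀)
        (𝓝 (E s₀ * G s₀)) :=
      hcont.mono_left (nhdsWithin_mono _ Set.diff_subset)
    have hlim : E s₀ * G s₀ = Fc j := by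
      rw [hGs₀, hEdef, hs₀def]
      dsimp only
      have h1 : (-(j : ℂ) - 1) * (Real.log δ : ℂ) = ((-(j : ℤ) - 1 : ℤ) : ℂ) * (Real.log δ : ℂ) := by
        push_cast; ring
      rw [h1, Complex.exp_int_mul]
      have h2 : Complex.exp ((Real.log δ : ℂ)) = (δ : ℂ) := by
        rw [← Complex.ofReal_exp, Real.exp_log hδ]
      rw [h2, hadef]
      dsimp only
      have hδ0 : (δ : ℂ) ≠ 0 := by
        simpa using hδ.ne'
      rw [show (-(j : ℤ) - 1 : ℤ) = -((j + 1 : ℕ) : ℤ) by push_cast; ring, zpow_neg, zpow_natCast]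
      field_simp
    have hfilter : 𝓝[≠] s₀ = 𝓝[Metric.ball s₀ (1 / 2 : ℝ) \ {s₀}] s₀ := by
      rw [Set.diff_eq, Set.inter_comm]
      exact nhdsWithin_restrict' _ hmem
    rw [hfilter, ← hlim]
    apply Tendsto.congr' _ ht
    filter_upwards [self_mem_nhdsWithin] with s hs
    exact (hEq s hs).symm
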